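/- Let μ > 0 and -1 < U₀ < 0. Then there exists a unique k_crit > 0 such that λ_μ'(k_crit) = -U₀. Setting ω_crit = λ_μ(k_crit) + U₀·k_crit, the map ξ ↦ λ_μ(ξ) + U₀ξ is strictly increasing on the interval [-k_crit, k_crit] and is a bijection from [-k_crit, k_crit] onto [-ω_crit, ω_crit]. -/

import Mathlib

/-!
Statement 8: for a subcritical opposing current `-1 < U₀ < 0` there is a unique
critical wavenumber `k_crit > 0` with `λ_μ'(k_crit) = -U₀`; setting
`ω_crit = λ_μ(k_crit) + U₀k_crit`, the map `ξ ↦ λ_μ(ξ) + U₀ξ` is strictly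
increasing on `[-k_crit, k_crit]` and is a bijection from `[-k_crit, k_crit]`
onto `[-ω_crit, ω_crit]`.
-/

noncomputable section

open Real Set Filter Topology

/-- The dispersion function of the linear water wave problem. -/
def lamμ (μ : ℝ) (r : ℝ) : ℝ :=
  Real.sign r * Real.sqrt (r * Real.tanh (Real.sqrt μ * r) / Real.sqrt μ)


lemma tanh_pos' {x : ℝ} (hx : 0 < x) : 0 < Real.tanh x := by
  rw [Real.tanh_eq_sinh_div_cosh]
  exact div_pos (by rwa [Real.sinh_pos_iff]) (Real.cosh_pos x)

lemma tanh_lt_one' (x : ℝ) : Real.tanh x < 1 := by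
  rw [Real.tanh_eq_sinh_div_cosh, div_lt_one (Real.cosh_pos x)]
  exact Real.sinh_lt_cosh x

lemma hasDerivAt_tanh' (x : ℝ) : HasDerivAt Real.tanh (1 - Real.tanh x ^ 2) x := by
  have h := (Real.hasDerivAt_sinh x).div (Real.hasDerivAt_cosh x) (Real.cosh_pos x).ne'
  have heq : Real.tanh = fun y => Real.sinh y / Real.cosh y := by
    funext y; exact Real.tanh_eq_sinh_div_cosh y
  rw [heq]
  refine h.congr_deriv ?_
  have h2 := Real.cosh_sq_sub_sinh_sq x
  have hc := (Real.cosh_pos x).ne'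
  field_simp

lemma one_sub_tanh_sq (x : ℝ) : 1 - Real.tanh x ^ 2 = 1 / Real.cosh x ^ 2 := by
  have h2 := Real.cosh_sq_sub_sinh_sq x
  have hc := (Real.cosh_pos x).ne'
  rw [Real.tanh_eq_sinh_div_cosh]
  field_simp
  linarith

lemma sinh_lt_mul_cosh {x : ℝ} (hx : 0 < x) : Real.sinh x < x * Real.cosh x := by
  have key : StrictMonoOn (fun y => y * Real.cosh y - Real.sinh y) (Ici 0) := by
    apply strictMonoOn_of_deriv_pos (convex_Ici 0)
    · exact ((continuous_id.mul Real.continuous_cosh).sub Real.continuous_sinh).continuousOn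
    · intro y hy
      rw [interior_Ici] at hy
      have hd : HasDerivAt (fun y => y * Real.cosh y - Real.sinh y) (y * Real.sinh y) y := by
        have := ((hasDerivAt_id y).mul (Real.hasDerivAt_cosh y)).sub (Real.hasDerivAt_sinh y)
        exact this.congr_deriv (by simp)
      rw [hd.deriv]
      exact mul_pos hy (by rwa [Real.sinh_pos_iff])
  have h0 := key (mem_Ici.2 le_rfl) (mem_Ici.2 hx.le) hx
  simpa using h0

lemma continuous_tanh' : Continuous Real.tanh := by
  have heq : Real.tanh = fun y => Real.sinh y / Real.cosh y := by
    funext y; exact Real.tanh_eq_sinh_div_cosh y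
  rw [heq]
  exact Real.continuous_sinh.div Real.continuous_cosh fun x => (Real.cosh_pos x).ne'

/-- `φ(s) = λ'` in the rescaled variable `s = √μ x`. -/
noncomputable def phiW (s : ℝ) : ℝ :=
  (Real.tanh s + s * (1 - Real.tanh s ^ 2)) / (2 * Real.sqrt (s * Real.tanh s))

lemma strictAntiOn_tanh_div : StrictAntiOn (fun s => Real.tanh s / s) (Ioi 0) := by
  apply strictAntiOn_of_deriv_neg (convex_Ioi 0)
  · exact ContinuousOn.div continuous_tanh'.continuousOn continuousOn_id
      (fun x hx => ne_of_gt hx)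
  · intro x hx
    rw [interior_Ioi] at hx
    have hd : HasDerivAt (fun s => Real.tanh s / s)
        (((1 - Real.tanh x ^ 2) * x - Real.tanh x * 1) / x ^ 2) x :=
      (hasDerivAt_tanh' x).div (hasDerivAt_id x) (ne_of_gt hx)
    have hx' : (0:ℝ) < x := hx
    rw [hd.deriv]
    apply div_neg_of_neg_of_pos _ (by positivity)
    rw [one_sub_tanh_sq, Real.tanh_eq_sinh_div_cosh]
    have hc := Real.cosh_pos x
    have h1 : (1:ℝ) ≤ Real.cosh x := Real.one_le_cosh x
    have hs : x < Real.sinh x := Real.self_lt_sinh_iff.2 hx'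
    have hs0 : 0 < Real.sinh x := Real.sinh_pos_iff.2 hx'
    have hlt : x < Real.sinh x * Real.cosh x := by nlinarith
    have heq2 : 1 / Real.cosh x ^ 2 * x - Real.sinh x / Real.cosh x * 1
        = (x - Real.sinh x * Real.cosh x) / Real.cosh x ^ 2 := by
      field_simp
    rw [heq2]
    exact div_neg_of_neg_of_pos (by linarith) (by positivity)

lemma strictAntiOn_div_sinh : StrictAntiOn (fun s => s / Real.sinh s) (Ioi 0) := by
  apply strictAntiOn_of_deriv_neg (convex_Ioi 0)
  · exact ContinuousOn.div continuousOn_id Real.continuous_sinh.continuousOn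
      (fun x hx => (Real.sinh_pos_iff.2 hx).ne')
  · intro x hx
    rw [interior_Ioi] at hx
    have hx' : (0:ℝ) < x := hx
    have hs0 : 0 < Real.sinh x := Real.sinh_pos_iff.2 hx'
    have hd : HasDerivAt (fun s => s / Real.sinh s)
        ((1 * Real.sinh x - x * Real.cosh x) / Real.sinh x ^ 2) x :=
      (hasDerivAt_id x).div (Real.hasDerivAt_sinh x) hs0.ne'
    rw [hd.deriv]
    apply div_neg_of_neg_of_pos _ (by positivity)
    have := sinh_lt_mul_cosh hx'
    nlinarith

lemma phiW_eq {s : ℝ} (hs : 0 < s) :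
    phiW s = Real.sqrt (Real.tanh s / s) * ((1 + (2*s) / Real.sinh (2*s)) / 2) := by
  have ht : 0 < Real.tanh s := tanh_pos' hs
  have hst : 0 < s * Real.tanh s := mul_pos hs ht
  have hsq : 0 < Real.sqrt (s * Real.tanh s) := Real.sqrt_pos.2 hst
  have hsinh : Real.sinh (2*s) = 2 * Real.sinh s * Real.cosh s := by
    rw [two_mul, Real.sinh_add]; ring
  have hsinh0 : 0 < Real.sinh (2*s) := Real.sinh_pos_iff.2 (by linarith)
  have hc := Real.cosh_pos s
  have hss : Real.sinh s = Real.tanh s * Real.cosh s := by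
    rw [Real.tanh_eq_sinh_div_cosh]; field_simp
  -- key: tanh s + s*(1 - tanh s^2) = tanh s * (1 + 2s / sinh 2s)
  have hkey : Real.tanh s + s * (1 - Real.tanh s ^ 2)
      = Real.tanh s * (1 + (2*s) / Real.sinh (2*s)) := by
    rw [one_sub_tanh_sq, hsinh, hss]
    field_simp
  have hsqrt : Real.sqrt (Real.tanh s / s) = Real.tanh s / Real.sqrt (s * Real.tanh s) := by
    rw [show Real.tanh s / s = Real.tanh s ^ 2 / (s * Real.tanh s) by
      field_simp]
    rw [Real.sqrt_div (by positivity), Real.sqrt_sq ht.le]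
  rw [phiW, hkey, hsqrt]
  field_simp

lemma phiW_pos {s : ℝ} (hs : 0 < s) : 0 < phiW s := by
  have ht : 0 < Real.tanh s := tanh_pos' hs
  have ht1 : Real.tanh s < 1 := tanh_lt_one' s
  have hst : 0 < s * Real.tanh s := mul_pos hs ht
  apply div_pos
  · nlinarith
  · positivity

lemma strictAntiOn_phiW : StrictAntiOn phiW (Ioi 0) := by
  intro a ha b hb hab
  rw [phiW_eq ha, phiW_eq hb]
  have ha' : (0:ℝ) < a := ha
  have hb' : (0:ℝ) < b := hb
  have hf1 : Real.sqrt (Real.tanh b / b) < Real.sqrt (Real.tanh a / a) := by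
    have htb := tanh_pos' hb'
    apply Real.sqrt_lt_sqrt (by positivity)
    exact strictAntiOn_tanh_div ha hb hab
  have hf1b : 0 < Real.sqrt (Real.tanh b / b) :=
    Real.sqrt_pos.2 (div_pos (tanh_pos' hb') hb')
  have hf2 : (1 + (2*b) / Real.sinh (2*b)) / 2 ≤ (1 + (2*a) / Real.sinh (2*a)) / 2 := by
    have := strictAntiOn_div_sinh (mem_Ioi.2 (by linarith : (0:ℝ) < 2*a))
      (mem_Ioi.2 (by linarith : (0:ℝ) < 2*b)) (by linarith)
    linarith
  have hf2b : 0 < (1 + (2*b) / Real.sinh (2*b)) / 2 := by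
    have := Real.sinh_pos_iff.2 (by linarith : (0:ℝ) < 2*b)
    positivity
  calc Real.sqrt (Real.tanh b / b) * ((1 + (2*b) / Real.sinh (2*b)) / 2)
      < Real.sqrt (Real.tanh a / a) * ((1 + (2*b) / Real.sinh (2*b)) / 2) := by
        exact mul_lt_mul_of_pos_right hf1 hf2b
    _ ≤ Real.sqrt (Real.tanh a / a) * ((1 + (2*a) / Real.sinh (2*a)) / 2) := by
        apply mul_le_mul_of_nonneg_left hf2 (Real.sqrt_nonneg _)

lemma continuousOn_phiW : ContinuousOn phiW (Ioi 0) := by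
  apply ContinuousOn.div
  · exact (continuous_tanh'.add (continuous_id.mul
      (continuous_const.sub (continuous_tanh'.pow 2)))).continuousOn
  · exact (continuous_const.mul ((continuous_id.mul continuous_tanh').sqrt)).continuousOn
  · intro x hx
    have ht := tanh_pos' (mem_Ioi.1 hx)
    have : 0 < Real.sqrt (x * Real.tanh x) := Real.sqrt_pos.2 (mul_pos hx ht)
    positivity

lemma tendsto_tanh_div : Tendsto (fun s => Real.tanh s / s) (𝓝[≠] (0:ℝ)) (𝓝 1) := by
  have h := hasDerivAt_tanh' 0
  rw [hasDerivAt_iff_tendsto_slope] at h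
  simp only [Real.tanh_zero, ne_eq, OfNat.ofNat_ne_zero, not_false_eq_true, zero_pow,
    sub_zero] at h
  apply h.congr'
  filter_upwards [self_mem_nhdsWithin] with s hs
  simp [slope_def_field, Real.tanh_zero]

lemma tendsto_sinh_div : Tendsto (fun s => Real.sinh s / s) (𝓝[≠] (0:ℝ)) (𝓝 1) := by
  have h := Real.hasDerivAt_sinh 0
  rw [hasDerivAt_iff_tendsto_slope] at h
  rw [Real.cosh_zero] at h
  apply h.congr'
  filter_upwards [self_mem_nhdsWithin] with s hs
  simp [slope_def_field, Real.sinh_zero]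

lemma tendsto_div_sinh : Tendsto (fun s => s / Real.sinh s) (𝓝[≠] (0:ℝ)) (𝓝 1) := by
  have h := tendsto_sinh_div.inv₀ one_ne_zero
  rw [inv_one] at h
  apply h.congr'
  filter_upwards [self_mem_nhdsWithin] with s hs
  rw [← one_div, one_div_div]

lemma tendsto_phiW_one : Tendsto phiW (𝓝[>] (0:ℝ)) (𝓝 1) := by
  have hmono : 𝓝[>] (0:ℝ) ≤ 𝓝[≠] (0:ℝ) :=
    nhdsWithin_mono 0 (fun x hx => ne_of_gt hx)
  have hf1 : Tendsto (fun s => Real.sqrt (Real.tanh s / s)) (𝓝[>] (0:ℝ)) (𝓝 1) := by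
    have := (Real.continuous_sqrt.tendsto 1).comp (tendsto_tanh_div.mono_left hmono)
    rwa [Real.sqrt_one] at this
  have hdouble : Tendsto (fun s : ℝ => 2 * s) (𝓝[>] (0:ℝ)) (𝓝[≠] (0:ℝ)) := by
    rw [tendsto_nhdsWithin_iff]
    constructor
    · have h2 : Tendsto (fun s : ℝ => 2 * s) (𝓝 (0:ℝ)) (𝓝 (0:ℝ)) := by
        have h3 : Tendsto (fun s : ℝ => s) (𝓝 (0:ℝ)) (𝓝 (0:ℝ)) := tendsto_id
        simpa using h3.const_mul (2:ℝ)
      exact h2.mono_left nhdsWithin_le_nhds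
    · filter_upwards [self_mem_nhdsWithin] with s hs
      simp only [mem_compl_iff, mem_singleton_iff]
      have : (0:ℝ) < s := hs
      positivity
  have hf2' : Tendsto (fun s : ℝ => (2*s) / Real.sinh (2*s)) (𝓝[>] (0:ℝ)) (𝓝 1) :=
    tendsto_div_sinh.comp hdouble
  have hf2 : Tendsto (fun s : ℝ => (1 + (2*s) / Real.sinh (2*s)) / 2) (𝓝[>] (0:ℝ)) (𝓝 1) := by
    have h4 := ((tendsto_const_nhds (x := (1:ℝ)) (f := 𝓝[>] (0:ℝ))).add hf2').div_const 2
    norm_num at h4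
    exact h4
  have hprod := hf1.mul hf2
  rw [mul_one] at hprod
  apply hprod.congr'
  filter_upwards [self_mem_nhdsWithin] with s hs
  exact (phiW_eq hs).symm

lemma tanh_strictMono : StrictMono Real.tanh := by
  apply strictMono_of_deriv_pos
  intro x
  rw [(hasDerivAt_tanh' x).deriv]
  have h1 := tanh_lt_one' x
  have h2 := tanh_lt_one' (-x)
  rw [Real.tanh_neg] at h2
  nlinarith

lemma phiW_le {s : ℝ} (hs : 1 ≤ s) : phiW s ≤ 1 / Real.sqrt (s * Real.tanh 1) := by
  have hs0 : (0:ℝ) < s := by linarith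
  have ht := tanh_pos' hs0
  have ht1 := tanh_lt_one' s
  have htt : Real.tanh 1 ≤ Real.tanh s := by
    rcases eq_or_lt_of_le hs with h | h
    · rw [h]
    · exact (tanh_strictMono h).le
  have ht1pos : 0 < Real.tanh 1 := tanh_pos' one_pos
  have hcosh : s ≤ Real.cosh s ^ 2 := by
    have h1 : s < Real.sinh s := Real.self_lt_sinh_iff.2 hs0
    have h2 : Real.sinh s < Real.cosh s := Real.sinh_lt_cosh s
    nlinarith
  have hN : Real.tanh s + s * (1 - Real.tanh s ^ 2) ≤ 2 := by
    rw [one_sub_tanh_sq]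
    have hc2 : (0:ℝ) < Real.cosh s ^ 2 := by positivity
    have : s * (1 / Real.cosh s ^ 2) ≤ 1 := by
      rw [mul_one_div, div_le_one hc2]; exact hcosh
    linarith
  have hD : 2 * Real.sqrt (s * Real.tanh 1) ≤ 2 * Real.sqrt (s * Real.tanh s) := by
    have := Real.sqrt_le_sqrt (mul_le_mul_of_nonneg_left htt hs0.le)
    linarith
  have hDpos : 0 < 2 * Real.sqrt (s * Real.tanh 1) := by
    have : 0 < Real.sqrt (s * Real.tanh 1) := Real.sqrt_pos.2 (by positivity)
    linarith
  calc phiW s ≤ 2 / (2 * Real.sqrt (s * Real.tanh 1)) := div_le_div₀ (by norm_num) hN hDpos hD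
    _ = 1 / Real.sqrt (s * Real.tanh 1) := by
        rw [div_eq_div_iff hDpos.ne' (by positivity)]; ring

lemma exists_phiW_eq {ε : ℝ} (h0 : 0 < ε) (h1 : ε < 1) : ∃ s, 0 < s ∧ phiW s = ε := by
  obtain ⟨s₀, hs₀ε, hs₀⟩ :=
    ((tendsto_phiW_one.eventually (eventually_gt_nhds h1)).and self_mem_nhdsWithin).exists
  have hs₀0 : (0:ℝ) < s₀ := hs₀
  have ht1pos : 0 < Real.tanh 1 := tanh_pos' one_pos
  set s₁ : ℝ := max (max (s₀ + 1) 1) (1 / (ε ^ 2 * Real.tanh 1) + 1) with hs₁def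
  have hs₁1 : 1 ≤ s₁ := le_trans (le_max_right _ _) (le_max_left _ _)
  have hs₁s₀ : s₀ < s₁ := by
    have : s₀ + 1 ≤ s₁ := le_trans (le_max_left _ _) (le_max_left _ _)
    linarith
  have hs₁big : 1 / (ε ^ 2 * Real.tanh 1) < s₁ := by
    have : 1 / (ε ^ 2 * Real.tanh 1) + 1 ≤ s₁ := le_max_right _ _
    linarith
  have hφs₁ : phiW s₁ < ε := by
    have hle := phiW_le hs₁1
    have hkey : 1 / ε < Real.sqrt (s₁ * Real.tanh 1) := by
      rw [show (1:ℝ)/ε = Real.sqrt ((1/ε)^2) from (Real.sqrt_sq (by positivity)).symm]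
      apply Real.sqrt_lt_sqrt (by positivity)
      rw [div_pow, one_pow, div_lt_iff₀ (by positivity)]
      rw [div_lt_iff₀ (by positivity)] at hs₁big
      nlinarith
    have hsq : 0 < Real.sqrt (s₁ * Real.tanh 1) := lt_trans (by positivity) hkey
    calc phiW s₁ ≤ 1 / Real.sqrt (s₁ * Real.tanh 1) := hle
      _ < ε := by
          rw [div_lt_iff₀ hsq]
          rw [div_lt_iff₀ h0] at hkey
          linarith [mul_comm ε (Real.sqrt (s₁ * Real.tanh 1))]
  have hsub : Icc s₀ s₁ ⊆ Ioi (0:ℝ) := fun x hx => lt_of_lt_of_le hs₀0 hx.1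
  have hivt := intermediate_value_Icc' hs₁s₀.le (continuousOn_phiW.mono hsub)
  have hε : ε ∈ Icc (phiW s₁) (phiW s₀) := ⟨hφs₁.le, hs₀ε.le⟩
  obtain ⟨s, hsmem, hφs⟩ := hivt hε
  exact ⟨s, lt_of_lt_of_le hs₀0 hsmem.1, hφs⟩

lemma lamμ_zero (μ : ℝ) : lamμ μ 0 = 0 := by simp [lamμ]

lemma lamμ_odd (μ x : ℝ) : lamμ μ (-x) = -lamμ μ x := by
  unfold lamμ
  have h1 : -x * Real.tanh (Real.sqrt μ * -x) = x * Real.tanh (Real.sqrt μ * x) := by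
    rw [mul_neg, Real.tanh_neg]; ring
  rw [h1, Real.sign_neg]
  ring

lemma tendsto_const_mul_nhdsNE {c : ℝ} (hc : 0 < c) :
    Tendsto (fun r : ℝ => c * r) (𝓝[≠] (0:ℝ)) (𝓝[≠] (0:ℝ)) := by
  rw [tendsto_nhdsWithin_iff]
  constructor
  · have h3 : Tendsto (fun s : ℝ => s) (𝓝 (0:ℝ)) (𝓝 (0:ℝ)) := tendsto_id
    have h2 := h3.const_mul c
    simpa using h2.mono_left nhdsWithin_le_nhds
  · filter_upwards [self_mem_nhdsWithin] with s hs
    simp only [mem_compl_iff, mem_singleton_iff] at hs ⊢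
    exact mul_ne_zero hc.ne' hs

lemma nonneg_mul_tanh (c x : ℝ) (hc : 0 < c) : 0 ≤ x * Real.tanh (c * x) := by
  rcases lt_trichotomy x 0 with h | h | h
  · have : Real.tanh (c * x) < 0 := by
      have := tanh_pos' (x := -(c*x)) (by nlinarith)
      rw [Real.tanh_neg] at this; linarith
    nlinarith
  · simp [h]
  · have := tanh_pos' (x := c*x) (by nlinarith)
    nlinarith

lemma hasDerivAt_lamμ_pos {μ : ℝ} (hμ : 0 < μ) {x : ℝ} (hx : 0 < x) :
    HasDerivAt (lamμ μ) (phiW (Real.sqrt μ * x)) x := by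
  set c := Real.sqrt μ with hcdef
  have hc : 0 < c := Real.sqrt_pos.2 hμ
  set s := c * x with hsdef
  have hs : 0 < s := by positivity
  have ht : 0 < Real.tanh s := tanh_pos' hs
  have hinnerg : HasDerivAt (fun y : ℝ => Real.tanh (c * y))
      ((1 - Real.tanh (c*x) ^ 2) * (c * 1)) x :=
    (hasDerivAt_tanh' (c*x)).comp x ((hasDerivAt_id x).const_mul c)
  have hinner : HasDerivAt (fun y : ℝ => y * Real.tanh (c * y) / c)
      ((1 * Real.tanh (c*x) + x * ((1 - Real.tanh (c*x) ^ 2) * (c * 1))) / c) x :=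
    ((hasDerivAt_id x).mul hinnerg).div_const c
  have hpx : 0 < x * Real.tanh (c*x) / c := by
    rw [← hsdef] at *; positivity
  have hsqrt := hinner.sqrt hpx.ne'
  have heq : lamμ μ =ᶠ[𝓝 x] fun y => Real.sqrt (y * Real.tanh (c * y) / c) := by
    filter_upwards [Ioi_mem_nhds hx] with y hy
    unfold lamμ
    rw [Real.sign_of_pos hy, one_mul]
  have hfinal := hsqrt.congr_of_eventuallyEq heq
  refine hfinal.congr_deriv ?_
  have hsq : Real.sqrt (x * Real.tanh (c*x) / c) = Real.sqrt (s * Real.tanh s) / c := by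
    rw [show x * Real.tanh (c*x) / c = (s * Real.tanh s) / c^2 by
      rw [← hsdef]; field_simp; ring]
    rw [Real.sqrt_div (by positivity), Real.sqrt_sq hc.le]
  rw [hsq, phiW, ← hsdef]
  have hst : 0 < Real.sqrt (s * Real.tanh s) := Real.sqrt_pos.2 (by positivity)
  field_simp
  ring

lemma hasDerivAt_lamμ_zero {μ : ℝ} (hμ : 0 < μ) : HasDerivAt (lamμ μ) 1 0 := by
  set c := Real.sqrt μ with hcdef
  have hc : 0 < c := Real.sqrt_pos.2 hμ
  rw [hasDerivAt_iff_tendsto_slope]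
  have hlim : Tendsto (fun r : ℝ => Real.sqrt (Real.tanh (c*r) / (c*r))) (𝓝[≠] (0:ℝ)) (𝓝 1) := by
    have h1 := tendsto_tanh_div.comp (tendsto_const_mul_nhdsNE hc)
    have h2 := (Real.continuous_sqrt.tendsto 1).comp h1
    rwa [Real.sqrt_one] at h2
  apply hlim.congr'
  filter_upwards [self_mem_nhdsWithin] with r hr
  simp only [mem_compl_iff, mem_singleton_iff] at hr
  have hslope : slope (lamμ μ) 0 r = lamμ μ r / r := by
    rw [slope_def_field, lamμ_zero]; ring_nf
  have hnn : 0 ≤ r * Real.tanh (c * r) := nonneg_mul_tanh c r hc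
  have hkey : ∀ u : ℝ, 0 < u → lamμ μ u / u = Real.sqrt (Real.tanh (c*u) / (c*u)) := by
    intro u hu
    have htu : 0 < Real.tanh (c*u) := tanh_pos' (by positivity)
    unfold lamμ
    rw [Real.sign_of_pos hu, one_mul,
      show Real.sqrt (u * Real.tanh (c*u) / c) / u
        = Real.sqrt (u * Real.tanh (c*u) / c) / Real.sqrt (u^2) by
        rw [Real.sqrt_sq hu.le],
      ← Real.sqrt_div (by positivity : (0:ℝ) ≤ u * Real.tanh (c*u) / c)]
    congr 1
    field_simp
  rw [hslope]
  rcases lt_or_gt_of_ne hr with h | h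
  · have hr' : 0 < -r := by linarith
    have h2 := hkey (-r) hr'
    have e1 : lamμ μ r / r = lamμ μ (-r) / (-r) := by
      rw [show lamμ μ (-r) = -lamμ μ r from lamμ_odd μ r]
      ring
    rw [e1, h2, mul_neg, Real.tanh_neg, neg_div_neg_eq]
  · exact (hkey r h).symm

lemma hasDerivAt_lamμ {μ : ℝ} (hμ : 0 < μ) (x : ℝ) :
    HasDerivAt (lamμ μ) (if x = 0 then 1 else phiW (Real.sqrt μ * |x|)) x := by
  rcases lt_trichotomy x 0 with h | h | h
  · rw [if_neg h.ne, abs_of_neg h]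
    have hpos := hasDerivAt_lamμ_pos hμ (neg_pos.2 h)
    have h1 := hpos.comp x (hasDerivAt_neg x)
    have h2 := h1.neg
    have heq : (-(lamμ μ ∘ Neg.neg)) = lamμ μ := by
      funext y; simp only [Pi.neg_apply, Function.comp]; rw [lamμ_odd]; ring
    rw [heq] at h2
    exact h2.congr_deriv (by ring)
  · subst h; simpa using hasDerivAt_lamμ_zero hμ
  · rw [if_neg h.ne', abs_of_pos h]; exact hasDerivAt_lamμ_pos hμ h

lemma continuous_lamμ {μ : ℝ} (hμ : 0 < μ) : Continuous (lamμ μ) :=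
  Differentiable.continuous fun x => (hasDerivAt_lamμ hμ x).differentiableAt

theorem critical_wavenumber_opposing_current
    (μ : ℝ) (hμ : 0 < μ) (U₀ : ℝ) (hU₀l : -1 < U₀) (hU₀r : U₀ < 0) :
    (∃! kcrit : ℝ, 0 < kcrit ∧ deriv (lamμ μ) kcrit = -U₀)
    ∧ ∀ kcrit : ℝ, 0 < kcrit → deriv (lamμ μ) kcrit = -U₀ →
        StrictMonoOn (fun ξ => lamμ μ ξ + U₀ * ξ) (Set.Icc (-kcrit) kcrit)
        ∧ Set.BijOn (fun ξ => lamμ μ ξ + U₀ * ξ) (Set.Icc (-kcrit) kcrit)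
            (Set.Icc (-(lamμ μ kcrit + U₀ * kcrit)) (lamμ μ kcrit + U₀ * kcrit)) := by
  have hc : 0 < Real.sqrt μ := Real.sqrt_pos.2 hμ
  have hU : 0 < -U₀ := by linarith
  have hU1 : -U₀ < 1 := by linarith
  obtain ⟨s, hs, hphis⟩ := exists_phiW_eq hU hU1
  set k₀ := s / Real.sqrt μ with hk₀
  have hk₀pos : 0 < k₀ := by positivity
  have hks : Real.sqrt μ * k₀ = s := by rw [hk₀]; field_simp
  have hderiv : ∀ k : ℝ, 0 < k → deriv (lamμ μ) k = phiW (Real.sqrt μ * k) :=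
    fun k hk => (hasDerivAt_lamμ_pos hμ hk).deriv
  have hmain : deriv (lamμ μ) k₀ = -U₀ := by rw [hderiv k₀ hk₀pos, hks, hphis]
  constructor
  · refine ⟨k₀, ⟨hk₀pos, hmain⟩, ?_⟩
    rintro y ⟨hy, hdy⟩
    have h1 : phiW (Real.sqrt μ * y) = phiW (Real.sqrt μ * k₀) := by
      rw [← hderiv y hy, ← hderiv k₀ hk₀pos, hdy, hmain]
    have h2 := strictAntiOn_phiW.injOn (mem_Ioi.2 (by positivity : 0 < Real.sqrt μ * y))
      (mem_Ioi.2 (by positivity : 0 < Real.sqrt μ * k₀)) h1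
    exact mul_left_cancel₀ hc.ne' h2
  · intro k hk hdk
    have hphik : phiW (Real.sqrt μ * k) = -U₀ := by rw [← hderiv k hk, hdk]
    have hcont : Continuous (fun ξ => lamμ μ ξ + U₀ * ξ) :=
      (continuous_lamμ hμ).add (continuous_const.mul continuous_id)
    have hmono : StrictMonoOn (fun ξ => lamμ μ ξ + U₀ * ξ) (Icc (-k) k) := by
      apply strictMonoOn_of_deriv_pos (convex_Icc _ _) hcont.continuousOn
      intro x hx
      rw [interior_Icc] at hx
      have hD : HasDerivAt (fun ξ => lamμ μ ξ + U₀ * ξ)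
          ((if x = 0 then 1 else phiW (Real.sqrt μ * |x|)) + U₀ * 1) x :=
        (hasDerivAt_lamμ hμ x).add ((hasDerivAt_id x).const_mul U₀)
      rw [hD.deriv]
      by_cases hx0 : x = 0
      · rw [if_pos hx0]; linarith
      · rw [if_neg hx0]
        have habs : |x| < k := abs_lt.2 ⟨hx.1, hx.2⟩
        have habs0 : 0 < |x| := abs_pos.2 hx0
        have hlt := strictAntiOn_phiW (mem_Ioi.2 (by positivity : 0 < Real.sqrt μ * |x|))
          (mem_Ioi.2 (by positivity : 0 < Real.sqrt μ * k))
          (by nlinarith : Real.sqrt μ * |x| < Real.sqrt μ * k)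
        rw [hphik] at hlt
        linarith
    refine ⟨hmono, ?_⟩
    have hkk : -k ≤ k := by linarith
    have hodd : lamμ μ (-k) + U₀ * (-k) = -(lamμ μ k + U₀ * k) := by rw [lamμ_odd]; ring
    have hmem1 : -k ∈ Icc (-k) k := left_mem_Icc.2 hkk
    have hmem2 : k ∈ Icc (-k) k := right_mem_Icc.2 hkk
    refine ⟨?_, hmono.injOn, ?_⟩
    · intro x hx
      have hle1 : lamμ μ (-k) + U₀ * (-k) ≤ lamμ μ x + U₀ * x :=
        hmono.monotoneOn hmem1 hx hx.1
      have hle2 : lamμ μ x + U₀ * x ≤ lamμ μ k + U₀ * k :=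
        hmono.monotoneOn hx hmem2 hx.2
      rw [hodd] at hle1
      exact ⟨hle1, hle2⟩
    · have hivt := intermediate_value_Icc hkk hcont.continuousOn
      intro y hy
      apply hivt
      show y ∈ Icc (lamμ μ (-k) + U₀ * (-k)) (lamμ μ k + U₀ * k)
      rw [hodd]
      exact hy
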